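/- Let a < 0, 0 ≤ b ≤ 1/2, and r(x) = ax/(1+bx). Set r₂(x) = ax/(1 + (1/2 − b)x) and w(x) = −r(e^{−x} − 1). Then w(x) ≥ r₂(x) for all x > 0, and w(x) ≤ r₂(x) for all x < 0 with x > −1/(1/2 − b) when b < 1/2 (for b = 1/2, r₂(x) = ax and the inequalities hold for all x of the corresponding sign). Equivalently, −r(e^{−x}−1) compared with r₂(x) changes side at x = 0 with r₂ below w on (0,∞) and above w on the negative side of its domain. -/

import Mathlib

open Set Filter Topology

private lemma g_hasDerivAt (x : ℝ) :
    HasDerivAt (fun x : ℝ => x / 2 * (1 + Real.exp (-x)) + Real.exp (-x) - 1)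
      ((1 - (1 + x) * Real.exp (-x)) / 2) x := by
  have he : HasDerivAt (fun x : ℝ => Real.exp (-x)) (-Real.exp (-x)) x := by
    have := (hasDerivAt_neg x).exp
    simpa using this
  have h1 : HasDerivAt (fun x : ℝ => x / 2) (1 / 2) x := by
    simpa using (hasDerivAt_id x).div_const 2
  have h2 : HasDerivAt (fun x : ℝ => 1 + Real.exp (-x)) (-Real.exp (-x)) x := by
    simpa using he
  have := ((h1.mul h2).add he).sub_const 1
  exact this.congr_deriv (by ring)

private lemma g_mono : Monotone (fun x : ℝ => x / 2 * (1 + Real.exp (-x)) + Real.exp (-x) - 1) := by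
  apply monotone_of_deriv_nonneg
  · exact fun x => (g_hasDerivAt x).differentiableAt
  · intro x
    rw [(g_hasDerivAt x).deriv]
    have h1 : (1 + x) * Real.exp (-x) ≤ 1 := by
      have h2 : 1 + x ≤ Real.exp x := by linarith [Real.add_one_le_exp x]
      have h3 : (1 + x) * Real.exp (-x) ≤ Real.exp x * Real.exp (-x) :=
        mul_le_mul_of_nonneg_right h2 (Real.exp_pos _).le
      rwa [← Real.exp_add, add_neg_cancel, Real.exp_zero] at h3
    linarith

private lemma g_nonneg {x : ℝ} (hx : 0 ≤ x) :
    0 ≤ x / 2 * (1 + Real.exp (-x)) + Real.exp (-x) - 1 := by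
  have := g_mono hx
  simpa using this

private lemma g_nonpos {x : ℝ} (hx : x ≤ 0) :
    x / 2 * (1 + Real.exp (-x)) + Real.exp (-x) - 1 ≤ 0 := by
  have := g_mono hx
  simpa using this

/-- Comparison used in (ar3)/(ar4): for a < 0, 0 ≤ b ≤ 1/2,
r(x) = ax/(1+bx), r₂(x) = ax/(1 + (1/2 - b)x) and w(x) = -r(e⁻ˣ - 1), one has
w(x) ≥ r₂(x) for x > 0 and w(x) ≤ r₂(x) for x < 0 (on the domain of r₂, i.e.
x > -1/(1/2 - b) when b < 1/2). -/
theorem exp_comparison_lower (a b : ℝ) (ha : a < 0) (hb₀ : 0 ≤ b)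
    (hb : b ≤ 1 / 2)
    (r r₂ w : ℝ → ℝ)
    (hr : ∀ x : ℝ, r x = a * x / (1 + b * x))
    (hr₂ : ∀ x : ℝ, r₂ x = a * x / (1 + (1 / 2 - b) * x))
    (hw : ∀ x : ℝ, w x = -r (Real.exp (-x) - 1)) :
    (∀ x : ℝ, 0 < x → r₂ x ≤ w x) ∧
    (∀ x : ℝ, x < 0 → (b < 1 / 2 → -(1 / 2 - b)⁻¹ < x) → w x ≤ r₂ x) := by
  have hD1 : ∀ x : ℝ, 0 < 1 + b * (Real.exp (-x) - 1) := by
    intro x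
    nlinarith [Real.exp_pos (-x), mul_nonneg hb₀ (Real.exp_pos (-x)).le]
  constructor
  · intro x hx
    rw [hr₂, hw, hr]
    set u := Real.exp (-x) - 1 with hu
    have hD2 : 0 < 1 + (1 / 2 - b) * x := by
      nlinarith [mul_nonneg (by linarith : (0:ℝ) ≤ 1 / 2 - b) hx.le]
    rw [neg_div' (1 + b * u) (a * u), div_le_div_iff₀ hD2 (hD1 x)]
    have hg := g_nonneg hx.le
    have hid : x * (1 + b * u) + u * (1 + (1 / 2 - b) * x)
        = x / 2 * (1 + Real.exp (-x)) + Real.exp (-x) - 1 := by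
      rw [hu]; ring
    nlinarith [mul_nonneg (by linarith : (0:ℝ) ≤ -a) hg]
  · intro x hx hcond
    rw [hr₂, hw, hr]
    set u := Real.exp (-x) - 1 with hu
    have hD2 : 0 < 1 + (1 / 2 - b) * x := by
      rcases lt_or_eq_of_le hb with hlt | heq
      · have hbb : 0 < 1 / 2 - b := by linarith
        have h := (mul_lt_mul_iff_right₀ hbb).mpr (hcond hlt)
        have : (1 / 2 - b) * (-(1 / 2 - b)⁻¹) = -1 := by
          rw [mul_neg, mul_inv_cancel₀ hbb.ne']
        linarith [this ▸ h]
      · rw [← heq]; simp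
    rw [neg_div' (1 + b * u) (a * u), div_le_div_iff₀ (hD1 x) hD2]
    have hg := g_nonpos hx.le
    have hid : x * (1 + b * u) + u * (1 + (1 / 2 - b) * x)
        = x / 2 * (1 + Real.exp (-x)) + Real.exp (-x) - 1 := by
      rw [hu]; ring
    nlinarith [mul_nonneg (by linarith : (0:ℝ) ≤ -a) (neg_nonneg.mpr hg)]
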